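/- Let D be a connected digraph with n≥2 vertices. Then the following are equivalent: (i) ⟨D⟩ is isomorphic to the free semilattice of degree n−1, i.e. the semigroup of nonempty subsets of an (n−1)-element set under union; (ii) ⟨D⟩ is an inverse semigroup; (iii) ⟨D⟩ is commutative; (iv) D is a fan. Moreover, if any of these holds then |⟨D⟩| = 2^{n−1} − 1. -/

import Mathlib

/-- The transformation of `{1,…,n}` sending `a` to `b` and fixing all other points. -/
def arcT {n : ℕ} (a b : Fin n) : Fin n → Fin n := fun v => if v = a then b else v

/-- The semigroup `⟨D⟩` generated by the arcs of the digraph `D`; transformations act on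
the right, so a product `ε₁ε₂⋯ε_k` is the function `ε_k ∘ ⋯ ∘ ε₁`. -/
def genSg {n : ℕ} (D : Set (Fin n × Fin n)) : Set (Fin n → Fin n) :=
  { α | ∃ l : List (Fin n × Fin n), l ≠ [] ∧ (∀ p ∈ l, p ∈ D) ∧
      α = l.foldl (fun f p => arcT p.1 p.2 ∘ f) id }

/-- The product `x·y` in the right-action convention: apply `x` first, then `y`. -/
def sgMul {n : ℕ} (x y : Fin n → Fin n) : Fin n → Fin n := y ∘ x

/-- The right ideal `xS¹ = {x} ∪ xS`. -/
def rIdeal {n : ℕ} (S : Set (Fin n → Fin n)) (x : Fin n → Fin n) : Set (Fin n → Fin n) :=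
  insert x { y | ∃ s ∈ S, y = sgMul x s }

/-- The left ideal `S¹x = {x} ∪ Sx`. -/
def lIdeal {n : ℕ} (S : Set (Fin n → Fin n)) (x : Fin n → Fin n) : Set (Fin n → Fin n) :=
  insert x { y | ∃ s ∈ S, y = sgMul s x }

/-- The two-sided ideal `S¹xS¹`. -/
def jIdeal {n : ℕ} (S : Set (Fin n → Fin n)) (x : Fin n → Fin n) : Set (Fin n → Fin n) :=
  { y | ∃ s ∈ insert id S, ∃ t ∈ insert id S, y = sgMul s (sgMul x t) }

def RRel {n : ℕ} (S : Set (Fin n → Fin n)) (x y : Fin n → Fin n) : Prop :=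
  rIdeal S x = rIdeal S y

def LRel {n : ℕ} (S : Set (Fin n → Fin n)) (x y : Fin n → Fin n) : Prop :=
  lIdeal S x = lIdeal S y

def JRel {n : ℕ} (S : Set (Fin n → Fin n)) (x y : Fin n → Fin n) : Prop :=
  jIdeal S x = jIdeal S y

def RTrivial {n : ℕ} (S : Set (Fin n → Fin n)) : Prop :=
  ∀ x ∈ S, ∀ y ∈ S, RRel S x y → x = y

def LTrivial {n : ℕ} (S : Set (Fin n → Fin n)) : Prop :=
  ∀ x ∈ S, ∀ y ∈ S, LRel S x y → x = y

def HTrivial {n : ℕ} (S : Set (Fin n → Fin n)) : Prop :=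
  ∀ x ∈ S, ∀ y ∈ S, RRel S x y → LRel S x y → x = y

def JTrivial {n : ℕ} (S : Set (Fin n → Fin n)) : Prop :=
  ∀ x ∈ S, ∀ y ∈ S, JRel S x y → x = y

/-- `α` has a cycle of length `k`: `k` distinct points `a₀,…,a_{k-1}` with
`α(aᵢ) = a_{i+1 mod k}`. -/
def IsCycleOf {n : ℕ} (α : Fin n → Fin n) (k : ℕ) : Prop :=
  0 < k ∧ ∃ a : ZMod k → Fin n, Function.Injective a ∧ ∀ i, α (a i) = a (i + 1)

/-- `l(D)`: the maximal length of a cycle of an element of `⟨D⟩`. -/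
noncomputable def lD {n : ℕ} (D : Set (Fin n × Fin n)) : ℕ :=
  sSup { k | ∃ α ∈ genSg D, IsCycleOf α k }

/-- The arc set of a graph. -/
def arcsOf {n : ℕ} (G : SimpleGraph (Fin n)) : Set (Fin n × Fin n) :=
  { p | G.Adj p.1 p.2 }

/-- `l(G)` for a graph `G`. -/
noncomputable def lG {n : ℕ} (G : SimpleGraph (Fin n)) : ℕ := lD (arcsOf G)

/-- Reachability along directed walks of `D`. -/
def dreach {n : ℕ} (D : Set (Fin n × Fin n)) : Fin n → Fin n → Prop :=
  Relation.ReflTransGen (fun a b => (a, b) ∈ D)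

/-- The strong component of the vertex `v`. -/
def strongComp {n : ℕ} (D : Set (Fin n × Fin n)) (v : Fin n) : Set (Fin n) :=
  { u | dreach D u v ∧ dreach D v u }

/-- The underlying graph of the digraph `D`. -/
def underlying {n : ℕ} (D : Set (Fin n × Fin n)) : SimpleGraph (Fin n) where
  Adj a b := a ≠ b ∧ ((a, b) ∈ D ∨ (b, a) ∈ D)
  symm := ⟨fun a b h => ⟨h.1.symm, h.2.symm⟩⟩
  loopless := ⟨fun a h => h.1 rfl⟩

/-- `v 0, v 1, …, v r` is a cycle of the digraph `D`. -/
def IsDCycle {n : ℕ} (D : Set (Fin n × Fin n)) (r : ℕ) (v : ℕ → Fin n) : Prop :=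
  1 ≤ r ∧ v r = v 0 ∧ (∀ i < r, ∀ j < r, v i = v j → i = j) ∧
    ∀ i < r, (v i, v (i + 1)) ∈ D

def HasDCycle {n : ℕ} (D : Set (Fin n × Fin n)) : Prop := ∃ r v, IsDCycle D r v

def DAcyclic {n : ℕ} (D : Set (Fin n × Fin n)) : Prop := ¬ HasDCycle D

/-- `G` is a subgroup contained in the transformation semigroup `S`. -/
def IsSubgroupIn {n : ℕ} (S G : Set (Fin n → Fin n)) : Prop :=
  G ⊆ S ∧ (∀ x ∈ G, ∀ y ∈ G, sgMul x y ∈ G) ∧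
    ∃ e ∈ G, (∀ x ∈ G, sgMul e x = x ∧ sgMul x e = x) ∧
      ∀ x ∈ G, ∃ y ∈ G, sgMul x y = e ∧ sgMul y x = e

/-- Every subgroup of `S` is trivial. -/
def SgAperiodic {n : ℕ} (S : Set (Fin n → Fin n)) : Prop :=
  ∀ G, IsSubgroupIn S G → G.Subsingleton

/-- `S` is isomorphic to the free semilattice of degree `d`, i.e. the semigroup of
nonempty subsets of a `d`-element set under union. -/
def IsFreeSemilattice {n : ℕ} (S : Set (Fin n → Fin n)) (d : ℕ) : Prop :=
  ∃ f : (Fin n → Fin n) → Finset (Fin d),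
    Set.BijOn f S { A : Finset (Fin d) | A ≠ ∅ } ∧
    ∀ x ∈ S, ∀ y ∈ S, f (sgMul x y) = f x ∪ f y

/-- `S` is an inverse semigroup: every element has a unique semigroup inverse. -/
def InverseSg {n : ℕ} (S : Set (Fin n → Fin n)) : Prop :=
  ∀ x ∈ S, ∃! y, y ∈ S ∧ sgMul (sgMul x y) x = x ∧ sgMul (sgMul y x) y = y

/-- `S` is commutative. -/
def CommSg {n : ℕ} (S : Set (Fin n → Fin n)) : Prop :=
  ∀ x ∈ S, ∀ y ∈ S, sgMul x y = sgMul y x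

/-- `D` is a fan: isomorphic to an `m`-fan, the digraph on `{1,…,m}` with the arcs
`(i, m)` for `1 ≤ i ≤ m - 1`. -/
def IsFan {n : ℕ} (D : Set (Fin n × Fin n)) : Prop :=
  ∃ (m : ℕ), 1 ≤ m ∧ ∃ e : Fin n ≃ Fin m,
    ∀ a b : Fin n, ((a, b) ∈ D ↔ ((e b).val = m - 1 ∧ (e a).val ≠ m - 1))

lemma foldl_acc {n : ℕ} (l : List (Fin n × Fin n)) (acc : Fin n → Fin n) :
    l.foldl (fun f p => arcT p.1 p.2 ∘ f) acc
      = (l.foldl (fun f p => arcT p.1 p.2 ∘ f) id) ∘ acc := by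
  induction l generalizing acc with
  | nil => rfl
  | cons p l ih =>
    simp only [List.foldl_cons]
    rw [ih, ih (arcT p.1 p.2 ∘ id)]
    rfl

lemma genSg_mul {n : ℕ} {D : Set (Fin n × Fin n)} {x y : Fin n → Fin n}
    (hx : x ∈ genSg D) (hy : y ∈ genSg D) : sgMul x y ∈ genSg D := by
  obtain ⟨l1, h1, h1D, rfl⟩ := hx
  obtain ⟨l2, h2, h2D, rfl⟩ := hy
  refine ⟨l1 ++ l2, by simp [h1], ?_, ?_⟩
  · intro p hp
    rcases List.mem_append.1 hp with h | h
    exacts [h1D p h, h2D p h]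
  rw [List.foldl_append, foldl_acc l2 (List.foldl (fun f p => arcT p.1 p.2 ∘ f) id l1)]
  rfl

lemma arc_mem_genSg {n : ℕ} {D : Set (Fin n × Fin n)} {a b : Fin n}
    (h : (a, b) ∈ D) : arcT a b ∈ genSg D :=
  ⟨[(a, b)], by simp, by simpa using h, by simp⟩

lemma sgInvUnique {n : ℕ} {S : Set (Fin n → Fin n)} (hinv : InverseSg S)
    {x y1 y2 : Fin n → Fin n} (hx : x ∈ S)
    (h1 : y1 ∈ S ∧ sgMul (sgMul x y1) x = x ∧ sgMul (sgMul y1 x) y1 = y1)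
    (h2 : y2 ∈ S ∧ sgMul (sgMul x y2) x = x ∧ sgMul (sgMul y2 x) y2 = y2) : y1 = y2 := by
  obtain ⟨y, -, hu⟩ := hinv x hx
  rw [hu y1 h1, hu y2 h2]

lemma idem_mul_idem {n : ℕ} {S : Set (Fin n → Fin n)}
    (hcl : ∀ x ∈ S, ∀ y ∈ S, sgMul x y ∈ S) (hinv : InverseSg S)
    {a b : Fin n → Fin n} (ha : a ∈ S) (hb : b ∈ S)
    (haa : sgMul a a = a) (hbb : sgMul b b = b) :
    sgMul (sgMul a b) (sgMul a b) = sgMul a b := by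
  have hpS : sgMul a b ∈ S := hcl a ha b hb
  obtain ⟨x, ⟨hxS, hpxp, hxpx⟩, -⟩ := hinv (sgMul a b) hpS
  set g := sgMul (sgMul b x) a with hg
  have hgS : g ∈ S := hcl _ (hcl b hb x hxS) a ha
  have h1 : sgMul (sgMul (sgMul a b) g) (sgMul a b) = sgMul a b := by
    have e1 : sgMul (sgMul (sgMul a b) g) (sgMul a b)
        = sgMul a (sgMul (sgMul b b) (sgMul x (sgMul (sgMul a a) b))) := rfl
    rw [e1, haa, hbb]; exact hpxp
  have h2 : sgMul (sgMul g (sgMul a b)) g = g := by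
    have e2 : sgMul (sgMul g (sgMul a b)) g
        = sgMul b (sgMul (sgMul (sgMul x (sgMul (sgMul a a) (sgMul b b))) x) a) := rfl
    rw [e2, haa, hbb, hxpx]; rfl
  have hgx : g = x := sgInvUnique hinv hpS ⟨hgS, h1, h2⟩ ⟨hxS, hpxp, hxpx⟩
  have hgg : sgMul g g = g := by
    have e3 : sgMul g g = sgMul b (sgMul (sgMul (sgMul x (sgMul a b)) x) a) := rfl
    rw [e3, hxpx]; rfl
  have hxx : sgMul x x = x := by rw [← hgx]; exact hgg
  have hpx : sgMul a b = x :=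
    sgInvUnique hinv hxS ⟨hpS, hxpx, hpxp⟩ ⟨hxS, by rw [hxx, hxx], by rw [hxx, hxx]⟩
  rw [hpx]; exact hxx

lemma idem_comm {n : ℕ} {S : Set (Fin n → Fin n)}
    (hcl : ∀ x ∈ S, ∀ y ∈ S, sgMul x y ∈ S) (hinv : InverseSg S)
    {e f : Fin n → Fin n} (he : e ∈ S) (hf : f ∈ S)
    (hee : sgMul e e = e) (hff : sgMul f f = f) : sgMul e f = sgMul f e := by
  have hef := idem_mul_idem hcl hinv he hf hee hff
  have hfe := idem_mul_idem hcl hinv hf he hff hee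
  have c1 : sgMul (sgMul (sgMul e f) (sgMul f e)) (sgMul e f) = sgMul e f := by
    have e1 : sgMul (sgMul (sgMul e f) (sgMul f e)) (sgMul e f)
        = sgMul e (sgMul (sgMul f f) (sgMul (sgMul e e) f)) := rfl
    rw [e1, hee, hff]; exact hef
  have c2 : sgMul (sgMul (sgMul f e) (sgMul e f)) (sgMul f e) = sgMul f e := by
    have e2 : sgMul (sgMul (sgMul f e) (sgMul e f)) (sgMul f e)
        = sgMul f (sgMul (sgMul e e) (sgMul (sgMul f f) e)) := rfl
    rw [e2, hee, hff]; exact hfe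
  exact (sgInvUnique hinv (hcl e he f hf) ⟨hcl f hf e he, c1, c2⟩
    ⟨hcl e he f hf, by rw [hef, hef], by rw [hef, hef]⟩).symm

-- noA/noB from generator commutation
lemma noA_of_comm {n : ℕ} {D : Set (Fin n × Fin n)} (hloop : ∀ u : Fin n, (u, u) ∉ D)
    (hcomm : ∀ a b c d : Fin n, (a, b) ∈ D → (c, d) ∈ D →
      sgMul (arcT a b) (arcT c d) = sgMul (arcT c d) (arcT a b))
    {a b c : Fin n} (h1 : (a, b) ∈ D) (h2 : (a, c) ∈ D) : b = c := by
  have hab : a ≠ b := fun h => hloop a (h ▸ h1)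
  have hac : a ≠ c := fun h => hloop a (h ▸ h2)
  have := congrFun (hcomm a b a c h1 h2) a
  simpa [sgMul, arcT, Function.comp, if_neg (Ne.symm hab), if_neg (Ne.symm hac)] using this

lemma noB_of_comm {n : ℕ} {D : Set (Fin n × Fin n)} (hloop : ∀ u : Fin n, (u, u) ∉ D)
    (hcomm : ∀ a b c d : Fin n, (a, b) ∈ D → (c, d) ∈ D →
      sgMul (arcT a b) (arcT c d) = sgMul (arcT c d) (arcT a b))
    {a b c : Fin n} (h1 : (a, b) ∈ D) (h2 : (b, c) ∈ D) : False := by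
  have hab : a ≠ b := fun h => hloop a (h ▸ h1)
  have hbc : b ≠ c := fun h => hloop b (h ▸ h2)
  have := congrFun (hcomm a b b c h1 h2) a
  simp [sgMul, arcT, Function.comp, if_neg hab, if_neg (Ne.symm hab)] at this
  exact hbc this.symm

lemma fan_of_configs {n : ℕ} (hn : 2 ≤ n) {D : Set (Fin n × Fin n)}
    (hloop : ∀ u : Fin n, (u, u) ∉ D) (hconn : (underlying D).Connected)
    (noA : ∀ a b c : Fin n, (a, b) ∈ D → (a, c) ∈ D → b = c)
    (noB : ∀ a b c : Fin n, (a, b) ∈ D → (b, c) ∈ D → False) : IsFan D := by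
  -- D is nonempty
  have h01 : (⟨0, by omega⟩ : Fin n) ≠ ⟨1, by omega⟩ := by simp [Fin.ext_iff]
  obtain ⟨w⟩ := hconn.preconnected ⟨0, by omega⟩ ⟨1, by omega⟩
  obtain ⟨a0, z, harc⟩ : ∃ a z : Fin n, (a, z) ∈ D := by
    cases w with
    | cons h p =>
      rcases h with ⟨-, h' | h'⟩
      · exact ⟨_, _, h'⟩
      · exact ⟨_, _, h'⟩
  set P : Fin n → Prop := fun v => v = z ∨ (v, z) ∈ D with hP
  have step : ∀ u v : Fin n, P u → (underlying D).Adj u v → P v := by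
    intro u v hu hadj
    rcases hu with rfl | hu
    · rcases hadj with ⟨-, h' | h'⟩
      · exact absurd (noB a0 u v harc h') id
      · exact Or.inr h'
    · rcases hadj with ⟨-, h' | h'⟩
      · exact Or.inl (noA u v z h' hu)
      · exact absurd (noB v u z h' hu) id
  have main : ∀ (u v : Fin n), (underlying D).Walk u v → P u → P v := by
    intro u v w
    induction w with
    | nil => exact id
    | cons h p ih => intro hu; exact ih (step _ _ hu h)
  have allP : ∀ v, P v := fun v => main z v (hconn.preconnected z v).some (Or.inl rfl)
  have hz : ∀ a b : Fin n, (a, b) ∈ D ↔ (b = z ∧ a ≠ z) := by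
    intro a b
    constructor
    · intro hab
      have haz : a ≠ z := by
        intro h
        rcases allP b with hb | hb
        · rw [h, hb] at hab; exact hloop z hab
        · exact noB z b z (h ▸ hab) hb
      rcases allP a with ha | ha
      · exact absurd ha haz
      · exact ⟨noA a b z hab ha, haz⟩
    · rintro ⟨rfl, haz⟩
      rcases allP a with ha | ha
      · exact absurd ha haz
      · exact ha
  -- build the fan
  set L : Fin n := ⟨n - 1, by omega⟩ with hL
  have key : ∀ v : Fin n, (Equiv.swap z L v).val = n - 1 ↔ v = z := by
    intro v
    constructor
    · intro h
      have h2 : Equiv.swap z L v = L := Fin.ext h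
      have := Equiv.swap_apply_eq_iff.mp h2
      rwa [Equiv.swap_apply_right] at this
    · rintro rfl; simp [hL]
  refine ⟨n, by omega, Equiv.swap z L, ?_⟩
  intro a b
  rw [hz a b]
  exact and_congr (key b).symm (not_congr (key a)).symm

/-- the transformation sending everything in `A` to `z` -/
def tZ {n : ℕ} (z : Fin n) (A : Finset (Fin n)) : Fin n → Fin n :=
  fun v => if v ∈ A then z else v

lemma fold_eq_tZ {n : ℕ} (z : Fin n) (l : List (Fin n × Fin n))
    (hl : ∀ p ∈ l, p.2 = z ∧ p.1 ≠ z) :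
    l.foldl (fun f p => arcT p.1 p.2 ∘ f) id = tZ z (l.map Prod.fst).toFinset := by
  induction l with
  | nil => funext v; simp [tZ]
  | cons p l ih =>
    obtain ⟨hp2, hp1⟩ := hl p List.mem_cons_self
    rw [List.foldl_cons, foldl_acc, ih (fun q hq => hl q (List.mem_cons_of_mem _ hq))]
    funext v
    simp only [tZ, Function.comp_apply, arcT, List.map_cons, List.toFinset_cons, id_eq]
    by_cases hv : v = p.1
    · subst hv
      rw [if_pos rfl, hp2, if_neg, if_pos (Finset.mem_insert_self _ _)]
      · intro hzm
        obtain ⟨q, hq, hq1⟩ := List.mem_map.mp (List.mem_toFinset.mp hzm)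
        exact (hl q (List.mem_cons_of_mem _ hq)).2 hq1
    · rw [if_neg hv]
      by_cases hm : v ∈ (l.map Prod.fst).toFinset
      · rw [if_pos hm, if_pos (Finset.mem_insert_of_mem hm)]
      · rw [if_neg hm, if_neg (fun h => (Finset.mem_insert.mp h).elim hv hm)]

lemma genSg_fan_struct {n : ℕ} {D : Set (Fin n × Fin n)} {z : Fin n}
    (hz : ∀ a b : Fin n, (a, b) ∈ D ↔ (b = z ∧ a ≠ z)) (α : Fin n → Fin n) :
    α ∈ genSg D ↔ ∃ A : Finset (Fin n), A.Nonempty ∧ z ∉ A ∧ α = tZ z A := by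
  constructor
  · rintro ⟨l, hne, hD, rfl⟩
    refine ⟨(l.map Prod.fst).toFinset, ?_, ?_, ?_⟩
    · obtain ⟨p, hp⟩ := List.exists_mem_of_ne_nil l hne
      exact ⟨p.1, List.mem_toFinset.mpr (List.mem_map.mpr ⟨p, hp, rfl⟩)⟩
    · intro hzm
      obtain ⟨q, hq, hq1⟩ := List.mem_map.mp (List.mem_toFinset.mp hzm)
      exact ((hz q.1 q.2).mp (hD q hq)).2 hq1
    · exact fold_eq_tZ z l (fun p hp => (hz p.1 p.2).mp (hD p hp))
  · rintro ⟨A, hA, hzA, rfl⟩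
    refine ⟨A.toList.map (fun a => (a, z)), ?_, ?_, ?_⟩
    · simp [Finset.toList_eq_nil, hA.ne_empty]
    · intro p hp
      obtain ⟨a, ha, rfl⟩ := List.mem_map.mp hp
      exact (hz a z).mpr ⟨rfl, fun h => hzA (h ▸ Finset.mem_toList.mp ha)⟩
    · rw [fold_eq_tZ z _ (fun p hp => by
        obtain ⟨a, ha, rfl⟩ := List.mem_map.mp hp
        exact ⟨rfl, fun h => hzA (h ▸ Finset.mem_toList.mp ha)⟩)]
      congr 1
      rw [List.map_map,
        show (Prod.fst ∘ fun a : Fin n => (a, z)) = id from rfl, List.map_id,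
        Finset.toList_toFinset]

lemma tZ_mul {n : ℕ} {z : Fin n} {A B : Finset (Fin n)} (hzB : z ∉ B) :
    sgMul (tZ z A) (tZ z B) = tZ z (A ∪ B) := by
  funext v
  simp only [sgMul, Function.comp_apply, tZ, Finset.mem_union]
  by_cases hA : v ∈ A
  · simp [hA, hzB]
  · simp only [if_neg hA]
    by_cases hB : v ∈ B
    · rw [if_pos hB, if_pos (Or.inr hB)]
    · rw [if_neg hB, if_neg (fun h => h.elim hA hB)]

lemma tZ_inj {n : ℕ} {z : Fin n} {A B : Finset (Fin n)} (hA : z ∉ A) (hB : z ∉ B)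
    (h : tZ z A = tZ z B) : A = B := by
  ext v
  have hv := congrFun h v
  simp only [tZ] at hv
  constructor
  · intro hvA
    by_contra hvB
    rw [if_pos hvA, if_neg hvB] at hv
    exact hA (hv.symm ▸ hvA)
  · intro hvB
    by_contra hvA
    rw [if_neg hvA, if_pos hvB] at hv
    exact hB (hv ▸ hvB)

def gZ {n : ℕ} (hn : 2 ≤ n) (z : Fin n) (v : Fin n) : Fin (n - 1) :=
  if _ : v.val < z.val then ⟨v.val, by have := z.isLt; omega⟩
  else ⟨v.val - 1, by have := v.isLt; omega⟩

def gZinv {n : ℕ} (hn : 2 ≤ n) (z : Fin n) (w : Fin (n - 1)) : Fin n :=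
  if _ : w.val < z.val then ⟨w.val, by have := w.isLt; omega⟩
  else ⟨w.val + 1, by have := w.isLt; omega⟩

lemma gZ_inj {n : ℕ} (hn : 2 ≤ n) {z u v : Fin n} (hu : u ≠ z) (hv : v ≠ z)
    (h : gZ hn z u = gZ hn z v) : u = v := by
  have hu' : u.val ≠ z.val := fun h' => hu (Fin.ext h')
  have hv' : v.val ≠ z.val := fun h' => hv (Fin.ext h')
  unfold gZ at h
  split_ifs at h with h1 h2 h2 <;>
    (simp only [Fin.mk.injEq] at h; exact Fin.ext (by omega))

lemma gZinv_ne {n : ℕ} (hn : 2 ≤ n) (z : Fin n) (w : Fin (n - 1)) :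
    gZinv hn z w ≠ z := by
  unfold gZinv
  split_ifs with h1 <;> (intro h; rw [Fin.ext_iff] at h; simp at h; omega)

lemma gZ_gZinv {n : ℕ} (hn : 2 ≤ n) (z : Fin n) (w : Fin (n - 1)) :
    gZ hn z (gZinv hn z w) = w := by
  unfold gZinv
  split_ifs with h1
  · unfold gZ
    rw [dif_pos h1]
  · unfold gZ
    rw [dif_neg (by simp; omega)]
    exact Fin.ext (by simp)

def fZ {n : ℕ} (hn : 2 ≤ n) (z : Fin n) (α : Fin n → Fin n) : Finset (Fin (n - 1)) :=
  (Finset.univ.filter fun v => α v = z ∧ v ≠ z).image (gZ hn z)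

lemma fZ_tZ {n : ℕ} (hn : 2 ≤ n) {z : Fin n} {A : Finset (Fin n)} (hzA : z ∉ A) :
    fZ hn z (tZ z A) = A.image (gZ hn z) := by
  unfold fZ
  congr 1
  ext v
  simp only [Finset.mem_filter, Finset.mem_univ, true_and]; simp only [tZ]
  constructor
  · rintro ⟨h1, h2⟩
    by_contra hvA
    rw [if_neg hvA] at h1
    exact h2 h1
  · intro hvA
    refine ⟨if_pos hvA, fun h => hzA (h ▸ hvA)⟩

lemma image_gZ_inj {n : ℕ} (hn : 2 ≤ n) {z : Fin n} {A B : Finset (Fin n)}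
    (hA : z ∉ A) (hB : z ∉ B) (h : A.image (gZ hn z) = B.image (gZ hn z)) : A = B := by
  ext v
  constructor
  · intro hvA
    have : gZ hn z v ∈ B.image (gZ hn z) := h ▸ Finset.mem_image_of_mem _ hvA
    obtain ⟨u, hu, hgu⟩ := Finset.mem_image.mp this
    exact gZ_inj hn (fun h' => hB (by rw [← h']; exact hu))
      (fun h' => hA (by rw [← h']; exact hvA)) hgu ▸ hu
  · intro hvB
    have : gZ hn z v ∈ A.image (gZ hn z) := h.symm ▸ Finset.mem_image_of_mem _ hvB
    obtain ⟨u, hu, hgu⟩ := Finset.mem_image.mp this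
    exact gZ_inj hn (fun h' => hA (by rw [← h']; exact hu))
      (fun h' => hB (by rw [← h']; exact hvB)) hgu ▸ hu

lemma main_of_hz {n : ℕ} (hn : 2 ≤ n) {D : Set (Fin n × Fin n)} {z : Fin n}
    (hz : ∀ a b : Fin n, (a, b) ∈ D ↔ (b = z ∧ a ≠ z)) :
    IsFreeSemilattice (genSg D) (n - 1) ∧ (genSg D).ncard = 2 ^ (n - 1) - 1 := by
  have hbij : Set.BijOn (fZ hn z) (genSg D) { A : Finset (Fin (n - 1)) | A ≠ ∅ } := by
    refine ⟨?_, ?_, ?_⟩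
    · intro x hx
      obtain ⟨A, hA, hzA, rfl⟩ := (genSg_fan_struct hz x).mp hx
      rw [fZ_tZ hn hzA]
      exact (hA.image _).ne_empty
    · intro x hx y hy hxy
      obtain ⟨A, hA, hzA, rfl⟩ := (genSg_fan_struct hz x).mp hx
      obtain ⟨B, hB, hzB, rfl⟩ := (genSg_fan_struct hz y).mp hy
      rw [fZ_tZ hn hzA, fZ_tZ hn hzB] at hxy
      rw [image_gZ_inj hn hzA hzB hxy]
    · intro B hB
      refine ⟨tZ z (B.image (gZinv hn z)), ?_, ?_⟩
      · refine (genSg_fan_struct hz _).mpr ⟨B.image (gZinv hn z), ?_, ?_, rfl⟩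
        · exact (Finset.nonempty_iff_ne_empty.mpr hB).image _
        · intro hmem
          obtain ⟨w, _, hw⟩ := Finset.mem_image.mp hmem
          exact gZinv_ne hn z w hw
      · rw [fZ_tZ hn (fun hmem => by
          obtain ⟨w, _, hw⟩ := Finset.mem_image.mp hmem
          exact gZinv_ne hn z w hw)]
        rw [Finset.image_image,
          show (gZ hn z ∘ gZinv hn z) = id from funext (gZ_gZinv hn z), Finset.image_id]
  constructor
  · refine ⟨fZ hn z, hbij, ?_⟩
    intro x hx y hy
    obtain ⟨A, hA, hzA, rfl⟩ := (genSg_fan_struct hz x).mp hx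
    obtain ⟨B, hB, hzB, rfl⟩ := (genSg_fan_struct hz y).mp hy
    rw [tZ_mul hzB, fZ_tZ hn hzA, fZ_tZ hn hzB,
      fZ_tZ hn (fun h => (Finset.mem_union.mp h).elim hzA hzB), Finset.image_union]
  · have h1 : (fZ hn z) '' (genSg D) = { A : Finset (Fin (n - 1)) | A ≠ ∅ } :=
      hbij.image_eq
    have h2 := Set.ncard_image_of_injOn hbij.injOn
    rw [h1] at h2
    rw [← h2]
    have h3 : { A : Finset (Fin (n - 1)) | A ≠ ∅ } = Set.univ \ {∅} := by
      ext A; simp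
    rw [h3, Set.ncard_diff_singleton_of_mem (Set.mem_univ _), Set.ncard_univ,
      Nat.card_eq_fintype_card, Fintype.card_finset, Fintype.card_fin]

lemma hz_of_fan {n : ℕ} (hn : 2 ≤ n) {D : Set (Fin n × Fin n)} (hfan : IsFan D) :
    ∃ z : Fin n, ∀ a b : Fin n, (a, b) ∈ D ↔ (b = z ∧ a ≠ z) := by
  obtain ⟨m, hm, e, he⟩ := hfan
  have hmn : m = n := by
    have := Fintype.card_congr e
    simpa using this.symm
  subst hmn
  refine ⟨e.symm ⟨m - 1, by omega⟩, ?_⟩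
  have key : ∀ v : Fin m, (e v).val = m - 1 ↔ v = e.symm ⟨m - 1, by omega⟩ := by
    intro v
    constructor
    · intro h
      have : e v = ⟨m - 1, by omega⟩ := Fin.ext h
      rw [← this, Equiv.symm_apply_apply]
    · rintro rfl
      rw [Equiv.apply_symm_apply]
  intro a b
  rw [he a b]
  exact and_congr (key b) (not_congr (key a))

lemma arcT_idem {n : ℕ} {a b : Fin n} (hab : a ≠ b) :
    sgMul (arcT a b) (arcT a b) = arcT a b := by
  funext v
  by_cases h : v = a <;> simp [sgMul, arcT, Function.comp, h, Ne.symm hab]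

lemma fan_of_gen_comm {n : ℕ} (hn : 2 ≤ n) {D : Set (Fin n × Fin n)}
    (hloop : ∀ u : Fin n, (u, u) ∉ D) (hconn : (underlying D).Connected)
    (hcomm : ∀ a b c d : Fin n, (a, b) ∈ D → (c, d) ∈ D →
      sgMul (arcT a b) (arcT c d) = sgMul (arcT c d) (arcT a b)) : IsFan D :=
  fan_of_configs hn hloop hconn
    (fun _ _ _ h1 h2 => noA_of_comm hloop hcomm h1 h2)
    (fun _ _ _ h1 h2 => noB_of_comm hloop hcomm h1 h2)

/-- For a connected digraph on `n ≥ 2` vertices the following are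
equivalent: `⟨D⟩` is a free semilattice of degree `n - 1`; `⟨D⟩` is inverse; `⟨D⟩` is
commutative; `D` is a fan.  Moreover, in that case `|⟨D⟩| = 2^(n-1) - 1`. -/
theorem stmt16 (n : ℕ) (hn : 2 ≤ n) (D : Set (Fin n × Fin n))
    (hloop : ∀ u : Fin n, (u, u) ∉ D) (hconn : (underlying D).Connected) :
    List.TFAE [
      IsFreeSemilattice (genSg D) (n - 1),
      InverseSg (genSg D),
      CommSg (genSg D),
      IsFan D] ∧
    (IsFan D → (genSg D).ncard = 2 ^ (n - 1) - 1) := by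
  have imp41 : IsFan D → IsFreeSemilattice (genSg D) (n - 1) := by
    intro hfan
    obtain ⟨z, hz⟩ := hz_of_fan hn hfan
    exact (main_of_hz hn hz).1
  have imp12 : IsFreeSemilattice (genSg D) (n - 1) → InverseSg (genSg D) := by
    rintro ⟨f, hbij, hmul⟩ x hx
    have hxx : sgMul x x ∈ genSg D := genSg_mul hx hx
    have hx3 : sgMul (sgMul x x) x ∈ genSg D := genSg_mul hxx hx
    have key : sgMul (sgMul x x) x = x := by
      apply hbij.injOn hx3 hx
      rw [hmul _ hxx _ hx, hmul _ hx _ hx, Finset.union_self, Finset.union_self]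
    refine ⟨x, ⟨hx, key, key⟩, ?_⟩
    rintro y ⟨hy, e1, e2⟩
    apply hbij.injOn hy hx
    have hxy : sgMul x y ∈ genSg D := genSg_mul hx hy
    have hyx : sgMul y x ∈ genSg D := genSg_mul hy hx
    have q1 : f x = (f x ∪ f y) ∪ f x := by
      conv_lhs => rw [← e1]
      rw [hmul _ hxy _ hx, hmul _ hx _ hy]
    have q2 : f y = (f y ∪ f x) ∪ f y := by
      conv_lhs => rw [← e2]
      rw [hmul _ hyx _ hy, hmul _ hy _ hx]
    apply Finset.Subset.antisymm
    · rw [q1]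
      exact Finset.subset_union_right.trans Finset.subset_union_left
    · rw [q2]
      exact Finset.subset_union_right.trans Finset.subset_union_left
  have imp13 : IsFreeSemilattice (genSg D) (n - 1) → CommSg (genSg D) := by
    rintro ⟨f, hbij, hmul⟩ x hx y hy
    apply hbij.injOn (genSg_mul hx hy) (genSg_mul hy hx)
    rw [hmul _ hx _ hy, hmul _ hy _ hx, Finset.union_comm]
  have imp24 : InverseSg (genSg D) → IsFan D := by
    intro hinv
    apply fan_of_gen_comm hn hloop hconn
    intro a b c d h1 h2
    have hab : a ≠ b := fun h => hloop a (h ▸ h1)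
    have hcd : c ≠ d := fun h => hloop c (h ▸ h2)
    exact idem_comm (fun x hx y hy => genSg_mul hx hy) hinv
      (arc_mem_genSg h1) (arc_mem_genSg h2) (arcT_idem hab) (arcT_idem hcd)
  have imp34 : CommSg (genSg D) → IsFan D := by
    intro hc
    apply fan_of_gen_comm hn hloop hconn
    intro a b c d h1 h2
    exact hc _ (arc_mem_genSg h1) _ (arc_mem_genSg h2)
  constructor
  · tfae_have 1 → 2 := imp12
    tfae_have 1 → 3 := imp13
    tfae_have 2 → 4 := imp24
    tfae_have 3 → 4 := imp34
    tfae_have 4 → 1 := imp41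
    tfae_finish
  · intro hfan
    obtain ⟨z, hz⟩ := hz_of_fan hn hfan
    exact (main_of_hz hn hz).2
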